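/- Let k ≥ 2 be a natural number. Then for every natural number n, the group cohomology H^n(ZMod k; ZMod k) of the cyclic group ZMod k with coefficients in the trivial module ZMod k is isomorphic to ZMod k as a ZMod k-module. -/

import Mathlib

open CategoryTheory Finsupp
noncomputable section
namespace ZC
variable (k : ℕ) [NeZero k]
abbrev G := Multiplicative (ZMod k)
abbrev M := MonoidAlgebra (ZMod k) (G k)
abbrev A : Rep (ZMod k) (G k) := Rep.ofMulAction (ZMod k) (G k) (G k)

def ρA (g : G k) : M k →ₗ[ZMod k] M k := (A k).ρ g

lemma ρA_eq (g : G k) : ((A k).ρ g : M k →ₗ[ZMod k] M k) = ρA k g := rfl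

lemma rho_eq (g : G k) (m : M k) :
    ρA k g m = MonoidAlgebra.single g 1 * m := by
  induction m using MonoidAlgebra.induction_on with
  | of g' =>
    show (Representation.ofMulAction (ZMod k) (G k) (G k) g) (MonoidAlgebra.single g' 1)
      = MonoidAlgebra.single g 1 * MonoidAlgebra.single g' 1
    rw [Representation.ofMulAction_single, MonoidAlgebra.single_mul_single, one_mul]
    rfl
  | add a b ha hb => rw [map_add, ha, hb, mul_add]
  | smul r f hf => rw [map_smul, hf, mul_smul_comm]

/-- Right multiplication by a fixed element, as a morphism of representations. -/
def mulRightHom (a : M k) : A k ⟶ A k := Rep.ofHom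
  { toLinearMap := (LinearMap.mulRight (ZMod k) a : M k →ₗ[ZMod k] M k)
    isIntertwining' g := by
      refine LinearMap.ext fun m => ?_
      show LinearMap.mulRight (ZMod k) a (ρA k g m) = ρA k g (LinearMap.mulRight (ZMod k) a m)
      simp only [LinearMap.mulRight_apply]
      rw [rho_eq, rho_eq, mul_assoc] }

@[simp] lemma mulRightHom_apply (a : M k) (m : M k) :
    (mulRightHom k a).hom m = m * a := rfl

lemma mulRightHom_comp (a b : M k) :
    mulRightHom k a ≫ mulRightHom k b = mulRightHom k (a * b) := by
  refine Rep.hom_ext (Representation.IntertwiningMap.ext (LinearMap.ext fun m => ?_))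
  show LinearMap.mulRight (ZMod k) b (LinearMap.mulRight (ZMod k) a m)
    = LinearMap.mulRight (ZMod k) (a * b) m
  simp only [LinearMap.mulRight_apply, mul_assoc]

lemma mulRightHom_zero : mulRightHom k 0 = 0 := by
  refine Rep.hom_ext (Representation.IntertwiningMap.ext (LinearMap.ext fun m => ?_))
  show LinearMap.mulRight (ZMod k) (0 : M k) m = 0
  simp

/-- The generator `X` of the group algebra. -/
def Xe : M k := MonoidAlgebra.single (Multiplicative.ofAdd (1 : ZMod k)) 1

/-- `X - 1`. -/
def T : M k := Xe k - 1

/-- The norm element `∑ g`. -/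
def N : M k := ∑ g : G k, MonoidAlgebra.single g 1

lemma N_apply (g : G k) : (N k).coeff g = 1 := by
  classical
  rw [N, MonoidAlgebra.coeff_sum]; simp only [MonoidAlgebra.coeff_single]; rw [Finset.sum_apply']
  rw [Finset.sum_eq_single g (fun b _ hb => Finsupp.single_eq_of_ne' hb)
    (fun h => absurd (Finset.mem_univ g) h)]
  exact Finsupp.single_eq_same

lemma single_mul_N (h : G k) : MonoidAlgebra.single h (1 : ZMod k) * N k = N k := by
  ext g
  rw [MonoidAlgebra.single_mul_apply, one_mul, N_apply, N_apply]

lemma sum_coeff_single (h : G k) (r : ZMod k) :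
    (∑ g : G k, (MonoidAlgebra.single h r : M k).coeff g) = r := by
  classical
  simp [Finsupp.single_apply]

lemma mul_N (m : M k) : m * N k = (∑ g : G k, m.coeff g) • N k := by
  classical
  induction m using MonoidAlgebra.induction_on with
  | of h =>
    rw [show MonoidAlgebra.of (ZMod k) (G k) h = MonoidAlgebra.single h 1 from rfl,
      single_mul_N, sum_coeff_single, one_smul]
  | add a b ha hb =>
    rw [add_mul, ha, hb, ← add_smul]
    congr 1
    rw [← Finset.sum_add_distrib]
    rfl
  | smul r f hf =>
    rw [smul_mul_assoc, hf, smul_smul]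
    congr 1
    rw [Finset.mul_sum]
    exact Finset.sum_congr rfl fun g _ => (Finsupp.smul_apply r f.coeff g).symm

lemma N_mul_T : N k * T k = 0 := by
  rw [T, mul_sub, mul_one, show N k * Xe k = Xe k * N k from mul_comm _ _, Xe,
    single_mul_N k (Multiplicative.ofAdd (1 : ZMod k)), sub_self]

lemma T_mul_N : T k * N k = 0 := by
  rw [mul_comm, N_mul_T]

/-- Sum-of-coefficients linear map. -/
def εl : M k →ₗ[ZMod k] ZMod k where
  toFun m := ∑ g : G k, m.coeff g
  map_add' a b := by rw [← Finset.sum_add_distrib]; exact Finset.sum_congr rfl fun g _ => Finsupp.add_apply a.coeff b.coeff g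
  map_smul' r m := by
    rw [RingHom.id_apply, Finset.smul_sum]
    exact Finset.sum_congr rfl fun g _ => Finsupp.smul_apply r m.coeff g

lemma εl_apply (m : M k) : εl k m = ∑ g : G k, m.coeff g := rfl

lemma εl_single (h : G k) (r : ZMod k) : εl k (MonoidAlgebra.single h r) = r :=
  sum_coeff_single k h r

lemma exists_of_mul_T_eq_zero (m : M k) (hm : m * T k = 0) : ∃ y : M k, y * N k = m := by
  have hX : m * Xe k = m := by
    rw [T, mul_sub, mul_one, sub_eq_zero] at hm
    exact hm
  have key : ∀ j : ℕ, m.coeff (Multiplicative.ofAdd ((j : ℕ) : ZMod k))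
      = m.coeff (Multiplicative.ofAdd ((0 : ℕ) : ZMod k)) := by
    intro j
    induction j with
    | zero => rfl
    | succ j ih =>
      have h1 : m.coeff (Multiplicative.ofAdd (((j+1 : ℕ)) : ZMod k))
          = (m * Xe k).coeff (Multiplicative.ofAdd (((j+1 : ℕ)) : ZMod k)) := by rw [hX]
      rw [h1, Xe, MonoidAlgebra.mul_single_apply, mul_one]
      have h2 : (Multiplicative.ofAdd (((j+1 : ℕ)) : ZMod k)) *
          (Multiplicative.ofAdd (1 : ZMod k))⁻¹ = Multiplicative.ofAdd ((j : ℕ) : ZMod k) := by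
        rw [← ofAdd_neg, ← ofAdd_add]
        congr 1
        push_cast
        ring
      rw [h2, ih]
  have hconst : ∀ g : G k, m.coeff g = m.coeff 1 := by
    intro g
    have h3 : ((Multiplicative.toAdd g).val : ZMod k) = Multiplicative.toAdd g :=
      ZMod.natCast_rightInverse _
    have h4 : Multiplicative.ofAdd (((Multiplicative.toAdd g).val : ℕ) : ZMod k) = g := by
      rw [h3]; exact ofAdd_toAdd g
    have := key (Multiplicative.toAdd g).val
    rw [h4] at this
    rw [this]
    congr 1
    rw [Nat.cast_zero]
    rfl
  refine ⟨MonoidAlgebra.single 1 (m.coeff 1), ?_⟩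
  have h5 : (MonoidAlgebra.single 1 (m.coeff 1) : M k) = (m.coeff 1) • MonoidAlgebra.single 1 1 := by
    rw [MonoidAlgebra.smul_single, smul_eq_mul, mul_one]
  rw [h5, smul_mul_assoc, single_mul_N]
  ext g
  rw [MonoidAlgebra.coeff_smul_apply, N_apply, smul_eq_mul, mul_one, hconst g]

/-- Partial geometric sums. -/
def S (j : ℕ) : M k :=
  ∑ i ∈ Finset.range j, MonoidAlgebra.single (Multiplicative.ofAdd ((i : ℕ) : ZMod k)) 1

lemma S_mul_T (j : ℕ) : S k j * T k
    = MonoidAlgebra.single (Multiplicative.ofAdd ((j : ℕ) : ZMod k)) 1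
      - MonoidAlgebra.single 1 1 := by
  induction j with
  | zero =>
    rw [S, Finset.range_zero, Finset.sum_empty, zero_mul]
    have : (Multiplicative.ofAdd (((0:ℕ)) : ZMod k)) = (1 : G k) := by
      rw [Nat.cast_zero]; rfl
    rw [this, sub_self]
  | succ j ih =>
    rw [S, Finset.sum_range_succ, ← S, add_mul, ih, T, mul_sub, mul_one, Xe,
      MonoidAlgebra.single_mul_single, mul_one]
    have : (Multiplicative.ofAdd ((j : ℕ) : ZMod k)) * Multiplicative.ofAdd (1 : ZMod k)
        = Multiplicative.ofAdd (((j+1 : ℕ)) : ZMod k) := by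
      rw [← ofAdd_add]
      congr 1
      push_cast
      ring
    rw [this]
    abel

lemma exists_of_eps_eq_zero (m : M k) (hm : εl k m = 0) : ∃ y : M k, y * T k = m := by
  classical
  have expand : ∑ g : G k, m.coeff g • (MonoidAlgebra.single g (1 : ZMod k) : M k) = m := by
    ext g'
    rw [MonoidAlgebra.coeff_sum, Finsupp.finset_sum_apply]
    simp [Finsupp.single_apply, Finset.sum_ite_eq']
  have hg : ∀ g : G k, (MonoidAlgebra.single g (1 : ZMod k) - MonoidAlgebra.single 1 1 : M k)
      ∈ LinearMap.range (LinearMap.mulRight (ZMod k) (T k)) := by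
    intro g
    refine ⟨S k (Multiplicative.toAdd g).val, ?_⟩
    show S k (Multiplicative.toAdd g).val * T k = _
    rw [S_mul_T]
    congr 2
    have h3 : ((Multiplicative.toAdd g).val : ZMod k) = Multiplicative.toAdd g :=
      ZMod.natCast_rightInverse _
    rw [h3]; exact ofAdd_toAdd g
  have hm' : m ∈ LinearMap.range (LinearMap.mulRight (ZMod k) (T k)) := by
    have heq : m = ∑ g : G k, m.coeff g • (MonoidAlgebra.single g (1 : ZMod k)
        - MonoidAlgebra.single 1 1 : M k) := by
      have : ∑ g : G k, m.coeff g • (MonoidAlgebra.single g (1 : ZMod k)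
          - MonoidAlgebra.single 1 1 : M k)
          = (∑ g : G k, m.coeff g • (MonoidAlgebra.single g (1 : ZMod k) : M k))
            - (∑ g : G k, m.coeff g) • (MonoidAlgebra.single 1 1 : M k) := by
        rw [Finset.sum_smul]
        rw [← Finset.sum_sub_distrib]
        exact Finset.sum_congr rfl fun g _ => smul_sub _ _ _
      rw [this, expand, ← εl_apply, hm, zero_smul, sub_zero]
    rw [heq]
    exact Submodule.sum_mem _ fun g _ => Submodule.smul_mem _ _ (hg g)
  obtain ⟨y, hy⟩ := hm'
  exact ⟨y, hy⟩

lemma εl_single_one_mul (g : G k) (m : M k) :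
    εl k (MonoidAlgebra.single g 1 * m) = εl k m := by
  rw [εl_apply, εl_apply]
  refine (Fintype.sum_equiv (Equiv.mulLeft g) _ _ fun h => ?_).symm
  rw [MonoidAlgebra.single_mul_apply, one_mul]
  congr 1
  exact (inv_mul_cancel_left g h).symm

lemma εl_mul_single (h : G k) (m : M k) :
    εl k (m * MonoidAlgebra.single h 1) = εl k m := by
  rw [εl_apply, εl_apply]
  refine (Fintype.sum_equiv (Equiv.mulRight h) _ _ fun g => ?_).symm
  rw [MonoidAlgebra.mul_single_apply, mul_one]
  congr 1
  exact (mul_inv_cancel_right g h).symm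

/-- The augmentation morphism. -/
def ε : A k ⟶ Rep.trivial (ZMod k) (G k) (ZMod k) := Rep.ofHom
  { toLinearMap := εl k
    isIntertwining' g := by
      refine LinearMap.ext fun m => ?_
      show εl k (ρA k g m) = εl k m
      rw [rho_eq, εl_single_one_mul] }

/-- The periodic complex `⋯ → R[G] → R[G] → R[G]`. -/
def Cx : ChainComplex (Rep (ZMod k) (G k)) ℕ :=
  ChainComplex.of (fun _ => A k)
    (fun n => mulRightHom k (if Even n then T k else N k))
    (fun n => by
      show mulRightHom k (if Even (n+1) then T k else N k) ≫
        mulRightHom k (if Even n then T k else N k) = 0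
      rcases Nat.even_or_odd n with h | h
      · rw [if_pos h, if_neg (by simp [Nat.even_add_one, h]), mulRightHom_comp, N_mul_T,
          mulRightHom_zero]
      · rw [if_neg (Nat.not_even_iff_odd.mpr h), if_pos (Nat.even_add_one.mpr
          (Nat.not_even_iff_odd.mpr h)), mulRightHom_comp, T_mul_N, mulRightHom_zero])

lemma Cx_d (n : ℕ) :
    (Cx k).d (n + 1) n = mulRightHom k (if Even n then T k else N k) :=
  ChainComplex.of_d (X := fun _ => A k) (d := fun n => mulRightHom k (if Even n then T k else N k)) n

lemma d10_eps : (Cx k).d 1 0 ≫ ε k = 0 := by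
  rw [Cx_d, if_pos (Even.zero)]
  refine Rep.hom_ext (Representation.IntertwiningMap.ext (LinearMap.ext fun (m : M k) => ?_))
  show εl k (LinearMap.mulRight (ZMod k) (T k) m) = 0
  rw [LinearMap.mulRight_apply, T, mul_sub, mul_one, map_sub, Xe, εl_mul_single, sub_self]

/-- The augmentation as chain map to the single complex. -/
def πres : Cx k ⟶ (ChainComplex.single₀ _).obj (Rep.trivial (ZMod k) (G k) (ZMod k)) :=
  ((Cx k).toSingle₀Equiv _).symm ⟨ε k, d10_eps k⟩

instance projA : Projective (A k) :=
  inferInstanceAs (Projective (Rep.leftRegular (ZMod k) (G k)))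

instance (n : ℕ) : Projective ((Cx k).X n) := projA k

lemma exact_pair (a b : M k) (hab : mulRightHom k a ≫ mulRightHom k b = 0)
    (hseq : ∀ m : M k, m * b = 0 → ∃ y : M k, y * a = m) :
    (ShortComplex.mk (mulRightHom k a) (mulRightHom k b) hab).Exact := by
  rw [← ShortComplex.exact_map_iff_of_faithful _
    (forget₂ (Rep (ZMod k) (G k)) (ModuleCat (ZMod k))),
    ShortComplex.moduleCat_exact_iff]
  intro x hx
  obtain ⟨y, hy⟩ := hseq x hx
  exact ⟨y, hy⟩

lemma Cx_exactAt (n : ℕ) : (Cx k).ExactAt (n + 1) := by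
  rw [HomologicalComplex.exactAt_iff' _ (n + 2) (n + 1) n (by simp) (by simp)]
  have e1 : (Cx k).d (n + 2) (n + 1)
      = mulRightHom k (if Even (n + 1) then T k else N k) := ChainComplex.of_d (X := fun _ => A k) (d := fun n => mulRightHom k (if Even n then T k else N k)) (n + 1)
  have e2 : (Cx k).d (n + 1) n
      = mulRightHom k (if Even n then T k else N k) := ChainComplex.of_d (X := fun _ => A k) (d := fun n => mulRightHom k (if Even n then T k else N k)) n
  rcases Nat.even_or_odd n with h | h
  · have h1 : (if Even (n + 1) then T k else N k) = N k := by
      simp [Nat.even_add_one, h]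
    have h2 : (if Even n then T k else N k) = T k := if_pos h
    have hex := exact_pair k (N k) (T k)
      (by rw [mulRightHom_comp, N_mul_T, mulRightHom_zero])
      (exists_of_mul_T_eq_zero k)
    refine ShortComplex.exact_of_iso ?_ hex
    refine ShortComplex.isoMk (Iso.refl _) (Iso.refl _) (Iso.refl _) ?_ ?_
    · show 𝟙 _ ≫ (Cx k).d (n + 2) (n + 1) = mulRightHom k (N k) ≫ 𝟙 _
      rw [e1, h1]; exact (Category.id_comp _).trans (Category.comp_id _).symm
    · show 𝟙 _ ≫ (Cx k).d (n + 1) n = mulRightHom k (T k) ≫ 𝟙 _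
      rw [e2, h2]; exact (Category.id_comp _).trans (Category.comp_id _).symm
  · have h' := Nat.not_even_iff_odd.mpr h
    have h1 : (if Even (n + 1) then T k else N k) = T k := by
      simp [Nat.even_add_one, h']
    have h2 : (if Even n then T k else N k) = N k := if_neg h'
    have hex := exact_pair k (T k) (N k)
      (by rw [mulRightHom_comp, T_mul_N, mulRightHom_zero])
      (fun m hm => by
        rw [mul_N] at hm
        have h0 : εl k m = 0 := by
          rw [εl_apply]
          have h3 : ((∑ g : G k, m.coeff g) • N k).coeff 1 = (0 : M k).coeff 1 := by rw [hm]
          rw [MonoidAlgebra.coeff_smul_apply, N_apply, smul_eq_mul, mul_one, MonoidAlgebra.coeff_zero, Finsupp.zero_apply] at h3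
          exact h3
        exact exists_of_eps_eq_zero k m h0)
    refine ShortComplex.exact_of_iso ?_ hex
    refine ShortComplex.isoMk (Iso.refl _) (Iso.refl _) (Iso.refl _) ?_ ?_
    · show 𝟙 _ ≫ (Cx k).d (n + 2) (n + 1) = mulRightHom k (T k) ≫ 𝟙 _
      rw [e1, h1]; exact (Category.id_comp _).trans (Category.comp_id _).symm
    · show 𝟙 _ ≫ (Cx k).d (n + 1) n = mulRightHom k (N k) ≫ 𝟙 _
      rw [e2, h2]; exact (Category.id_comp _).trans (Category.comp_id _).symm

abbrev Triv : Rep (ZMod k) (G k) := Rep.trivial (ZMod k) (G k) (ZMod k)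

instance epi_eps : Epi (ε k) := by
  have h : Epi ((forget₂ (Rep (ZMod k) (G k)) (ModuleCat (ZMod k))).map (ε k)) := by
    rw [ModuleCat.epi_iff_surjective]
    intro c
    exact ⟨MonoidAlgebra.single 1 c, εl_single k 1 c⟩
  exact (forget₂ (Rep (ZMod k) (G k)) (ModuleCat (ZMod k))).epi_of_epi_map h

lemma exact0 : (ShortComplex.mk ((Cx k).d 1 0) (ε k) (d10_eps k)).Exact := by
  have e2 : (Cx k).d 1 0 = mulRightHom k (T k) := by
    rw [Cx_d, if_pos Even.zero]
  have hc : mulRightHom k (T k) ≫ ε k = 0 := e2 ▸ d10_eps k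
  have hex : (ShortComplex.mk (mulRightHom k (T k)) (ε k) hc).Exact := by
    rw [← ShortComplex.exact_map_iff_of_faithful _
      (forget₂ (Rep (ZMod k) (G k)) (ModuleCat (ZMod k))),
      ShortComplex.moduleCat_exact_iff]
    intro x hx
    obtain ⟨y, hy⟩ := exists_of_eps_eq_zero k x hx
    exact ⟨y, hy⟩
  refine ShortComplex.exact_of_iso ?_ hex
  refine ShortComplex.isoMk (Iso.refl _) (Iso.refl _) (Iso.refl _) ?_ ?_
  · show 𝟙 (A k) ≫ (Cx k).d 1 0 = mulRightHom k (T k) ≫ 𝟙 (A k)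
    rw [e2]; exact (Category.id_comp _).trans (Category.comp_id _).symm
  · show 𝟙 (A k) ≫ ε k = ε k ≫ 𝟙 _
    rw [Category.id_comp, Category.comp_id]

/-- The periodic resolution as a projective resolution. -/
def res : ProjectiveResolution (Triv k) where
  complex := Cx k
  π := πres k
  quasiIso := ⟨fun n => by
    cases n with
    | zero =>
      rw [ChainComplex.quasiIsoAt₀_iff, ShortComplex.quasiIso_iff_of_zeros']
      · refine (ShortComplex.exact_and_epi_g_iff_of_iso ?_).2 ⟨exact0 k, by
          dsimp
          exact epi_eps k⟩
        exact ShortComplex.isoMk (Iso.refl _) (Iso.refl _) (Iso.refl _)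
          (by exact (Category.id_comp _).trans (Category.comp_id _).symm) (by exact (Category.id_comp _).trans (Category.comp_id _).symm)
      all_goals rfl
    | succ n =>
      rw [quasiIsoAt_iff_exactAt']
      · exact Cx_exactAt k n
      · exact ChainComplex.exactAt_succ_single_obj _ n⟩

lemma hom_triv_invariant (f : A k ⟶ Triv k) (g : G k) (v : M k) :
    f.hom (ρA k g v) = f.hom v := by
  show f.hom (((A k).ρ g) v) = f.hom v
  rw [Rep.hom_comm_apply f g v]
  rfl

lemma T_comp (f : A k ⟶ Triv k) : mulRightHom k (T k) ≫ f = 0 := by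
  refine Rep.hom_ext (Representation.IntertwiningMap.ext (LinearMap.ext fun m => ?_))
  show f.hom (LinearMap.mulRight (ZMod k) (T k) m) = 0
  have e1 : LinearMap.mulRight (ZMod k) (T k) m
      = ρA k (Multiplicative.ofAdd (1 : ZMod k)) m - ρA k 1 m := by
    rw [LinearMap.mulRight_apply, rho_eq, rho_eq, T, Xe, ← MonoidAlgebra.one_def]
    ring
  rw [e1, map_sub, hom_triv_invariant, hom_triv_invariant, sub_self]

lemma N_comp (f : A k ⟶ Triv k) : mulRightHom k (N k) ≫ f = 0 := by
  refine Rep.hom_ext (Representation.IntertwiningMap.ext (LinearMap.ext fun m => ?_))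
  show f.hom (LinearMap.mulRight (ZMod k) (N k) m) = 0
  have e : LinearMap.mulRight (ZMod k) (N k) m = (εl k m) • (N k) := by
    rw [LinearMap.mulRight_apply, mul_N, εl_apply]
  rw [e, map_smul]
  have hsingle : ∀ g : G k, f.hom (MonoidAlgebra.single g (1 : ZMod k))
      = f.hom (MonoidAlgebra.single 1 1) := by
    intro g
    have h1 := hom_triv_invariant k f g (MonoidAlgebra.single 1 1)
    rw [rho_eq, MonoidAlgebra.single_mul_single, mul_one, mul_one] at h1
    exact h1
  have hN : f.hom (N k) = 0 := by
    have h2 : f.hom (N k) = ∑ g : G k, f.hom (MonoidAlgebra.single g 1) := by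
      rw [N, map_sum]
    rw [h2, Finset.sum_congr rfl (fun g _ => hsingle g), Finset.sum_const, Finset.card_univ]
    have hcard : Fintype.card (G k) = k := by
      rw [Fintype.card_multiplicative]
      exact ZMod.card k
    rw [hcard, ← Nat.cast_smul_eq_nsmul (ZMod k), ZMod.natCast_self, zero_smul]
  rw [hN, smul_zero]

/-- The Hom-complex computing the cohomology. -/
abbrev D : CochainComplex (ModuleCat (ZMod k)) ℕ :=
  (Cx k).linearYonedaObj (ZMod k) (Triv k)

lemma D_d_zero (i j : ℕ) : (D k).d i j = 0 := by
  by_cases hij : i + 1 = j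
  · subst hij
    ext f
    show ((Cx k).d (i + 1) i) ≫ f = 0
    rw [Cx_d]
    rcases Nat.even_or_odd i with h | h
    · rw [if_pos h]; exact T_comp k f
    · rw [if_neg (Nat.not_even_iff_odd.mpr h)]; exact N_comp k f
  · exact HomologicalComplex.shape _ _ _ (by simpa using hij)

/-- Homology of the Hom-complex is its objects, since all differentials vanish. -/
def homologyIsoX (n : ℕ) : (D k).homology n ≅ (D k).X n :=
  (ShortComplex.HomologyData.ofZeros ((D k).sc n)
    (D_d_zero k _ n) (D_d_zero k n _)).left.homologyIso

/-- The object of the Hom-complex is `Hom(R[G], R) ≃ R`. -/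
def XIso (n : ℕ) : ((D k).X n : Type) ≃ₗ[ZMod k] ZMod k :=
  (Rep.leftRegularHomEquiv (Triv k))

/-- Main computation. -/
def cohomologyIso (n : ℕ) :
    groupCohomology (Rep.trivial (ZMod k) (Multiplicative (ZMod k)) (ZMod k)) n
      ≃ₗ[ZMod k] ZMod k :=
  ((groupCohomologyIsoExt (Triv k) n ≪≫ (res k).isoExt n (Triv k)
    ≪≫ homologyIsoX k n).toLinearEquiv).trans (XIso k n)

end ZC

end

/-- For `k ≥ 2`, the group cohomology `H^n(ZMod k; ZMod k)` of the cyclic group of order `k`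
with coefficients in the trivial module `ZMod k` is isomorphic to `ZMod k` as a
`ZMod k`-module, for every `n`. -/
theorem groupCohomology_zmod_self_trivial (k : ℕ) (hk : 2 ≤ k) :
    ∀ n : ℕ,
      Nonempty
        ((groupCohomology (Rep.trivial (ZMod k) (Multiplicative (ZMod k)) (ZMod k)) n)
          ≃ₗ[ZMod k] ZMod k) := by
  have : NeZero k := ⟨by omega⟩
  exact fun n => ⟨ZC.cohomologyIso k n⟩
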